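/- Let n be a positive integer, ρ ∈ ℝ, ε ≠ 0, γ ∈ ℝ. Suppose φ : ℝ → ℝ is three times differentiable and solves the initial value problem ε φ'''(ω) + φ(ω)ⁿ φ'(ω) − ((ρ+1)/3) ω φ'(ω) + ((ρ−2)/(3n)) φ(ω) = 0 with φ(0) = γ, φ'(0) = 0, φ''(0) = 0. Define u(x,t) = t^((ρ−2)/(3n)) φ( x t^(−(ρ+1)/3) ) for t > 0, x ≥ 0. Then: (i) u satisfies u_t + uⁿ u_x + ε t^ρ u_{xxx} = 0 for all t > 0, x > 0; (ii) u(0,t) = γ t^((ρ−2)/(3n)) for all t > 0; (iii) u_x(0,t) = 0 for all t > 0; and (iv) u_{xx}(0,t) = 0 for all t > 0. -/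

import Mathlib

/-- Partial derivative in `t` of `u = u(x,t)`. -/
noncomputable def ut (u : ℝ → ℝ → ℝ) (x t : ℝ) : ℝ := deriv (fun s => u x s) t
/-- Partial derivative in `x` of `u = u(x,t)`. -/
noncomputable def ux (u : ℝ → ℝ → ℝ) (x t : ℝ) : ℝ := deriv (fun y => u y t) x
/-- Second partial derivative in `x` of `u = u(x,t)`. -/
noncomputable def uxx (u : ℝ → ℝ → ℝ) (x t : ℝ) : ℝ := iteratedDeriv 2 (fun y => u y t) x
/-- Third partial derivative in `x` of `u = u(x,t)`. -/
noncomputable def uxxx (u : ℝ → ℝ → ℝ) (x t : ℝ) : ℝ := iteratedDeriv 3 (fun y => u y t) x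

/-- deriv of a scaled-argument function. -/
lemma deriv_scaled_aux (ψ : ℝ → ℝ) (hψ : Differentiable ℝ ψ) (k c : ℝ) :
    deriv (fun y => k * ψ (y * c)) = fun y => (k * c) * deriv ψ (y * c) := by
  funext y
  have h0 : HasDerivAt (fun y : ℝ => y * c) c y := by
    simpa using (hasDerivAt_id y).mul_const c
  have h1 : HasDerivAt (fun y : ℝ => ψ (y * c)) (deriv ψ (y * c) * c) y :=
    (hψ (y * c)).hasDerivAt.comp y h0
  have h2 := h1.const_mul k
  rw [h2.deriv]; ring

/-- Reduction of the IBVP for the generalized KdV equation `u_t + uⁿ u_x + ε t^ρ u_{xxx} = 0`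
to the IVP for a third-order ODE: a solution `φ` of the IVP yields, via the ansatz
`u = t^{(ρ−2)/(3n)} φ(x t^{−(ρ+1)/3})`, a solution of the PDE satisfying the boundary
conditions at `x = 0`. -/
theorem stmt_16 (n : ℕ) (hn : 0 < n) (ρ ε γ : ℝ) (hε : ε ≠ 0)
    (φ : ℝ → ℝ) (hφ1 : Differentiable ℝ φ) (hφ2 : Differentiable ℝ (deriv φ))
    (hφ3 : Differentiable ℝ (deriv (deriv φ)))
    (hode : ∀ ω : ℝ, ε * deriv (deriv (deriv φ)) ω + φ ω ^ n * deriv φ ω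
      - (ρ + 1) / 3 * ω * deriv φ ω + (ρ - 2) / (3 * (n:ℝ)) * φ ω = 0)
    (hic : φ 0 = γ) (hic' : deriv φ 0 = 0) (hic'' : deriv (deriv φ) 0 = 0)
    (u : ℝ → ℝ → ℝ)
    (hu : ∀ x t : ℝ, u x t = t ^ ((ρ - 2) / (3 * (n:ℝ))) * φ (x * t ^ (-(ρ + 1) / 3))) :
    (∀ t, 0 < t → ∀ x, 0 < x →
      ut u x t + (u x t) ^ n * ux u x t + ε * t ^ ρ * uxxx u x t = 0) ∧
    (∀ t, 0 < t → u 0 t = γ * t ^ ((ρ - 2) / (3 * (n:ℝ)))) ∧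
    (∀ t, 0 < t → ux u 0 t = 0) ∧
    (∀ t, 0 < t → uxx u 0 t = 0) := by
  have hn' : (n:ℝ) ≠ 0 := Nat.cast_ne_zero.mpr hn.ne'
  set a : ℝ := (ρ - 2) / (3 * (n:ℝ)) with ha
  set b : ℝ := -(ρ + 1) / 3 with hb
  have hfun : ∀ t : ℝ, (fun y => u y t) = fun y => t ^ a * φ (y * t ^ b) := by
    intro t; funext y; exact hu y t
  have hDx : ∀ t : ℝ, deriv (fun y => u y t)
      = fun y => (t ^ a * t ^ b) * deriv φ (y * t ^ b) := by
    intro t; rw [hfun t]; exact deriv_scaled_aux φ hφ1 _ _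
  have hDxx : ∀ t : ℝ, deriv (deriv (fun y => u y t))
      = fun y => (t ^ a * t ^ b * t ^ b) * deriv (deriv φ) (y * t ^ b) := by
    intro t; rw [hDx t]; exact deriv_scaled_aux (deriv φ) hφ2 _ _
  have hDxxx : ∀ t : ℝ, deriv (deriv (deriv (fun y => u y t)))
      = fun y => (t ^ a * t ^ b * t ^ b * t ^ b) * deriv (deriv (deriv φ)) (y * t ^ b) := by
    intro t; rw [hDxx t]; exact deriv_scaled_aux (deriv (deriv φ)) hφ3 _ _
  refine ⟨?_, ?_, ?_, ?_⟩
  · intro t ht x hx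
    set ω : ℝ := x * t ^ b with hω
    have hA1 : t ^ a * t⁻¹ = t ^ (a - 1) := by
      rw [Real.rpow_sub ht, Real.rpow_one, div_eq_mul_inv]
    have hA2 : (t ^ a) ^ n * (t ^ a * t ^ b) = t ^ (a - 1) := by
      have h1 : (t ^ a) ^ n = t ^ (a * n) := by
        rw [Real.rpow_mul ht.le, Real.rpow_natCast]
      rw [h1, ← Real.rpow_add ht, ← Real.rpow_add ht]
      congr 1
      field_simp [ha, hb]
      rw [ha, hb]; field_simp; ring
    have hA3 : t ^ ρ * (t ^ a * t ^ b * t ^ b * t ^ b) = t ^ (a - 1) := by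
      rw [← Real.rpow_add ht, ← Real.rpow_add ht, ← Real.rpow_add ht, ← Real.rpow_add ht]
      congr 1
      field_simp [ha, hb]
      ring
    have hBsub : t ^ (b - 1) = t ^ b * t⁻¹ := by
      rw [Real.rpow_sub ht, Real.rpow_one, div_eq_mul_inv]
    have h1 : HasDerivAt (fun s : ℝ => s ^ a) (a * t ^ (a - 1)) t :=
      Real.hasDerivAt_rpow_const (Or.inl ht.ne')
    have h2 : HasDerivAt (fun s : ℝ => s ^ b) (b * t ^ (b - 1)) t :=
      Real.hasDerivAt_rpow_const (Or.inl ht.ne')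
    have h3 : HasDerivAt (fun s : ℝ => x * s ^ b) (x * (b * t ^ (b - 1))) t := h2.const_mul x
    have h4 : HasDerivAt (fun s : ℝ => φ (x * s ^ b))
        (deriv φ ω * (x * (b * t ^ (b - 1)))) t :=
      (hφ1 ω).hasDerivAt.comp t h3
    have h5 : HasDerivAt (fun s : ℝ => s ^ a * φ (x * s ^ b))
        (a * t ^ (a - 1) * φ ω + t ^ a * (deriv φ ω * (x * (b * t ^ (b - 1))))) t :=
      h1.mul h4
    have hxs : (fun s => u x s) = fun s : ℝ => s ^ a * φ (x * s ^ b) := by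
      funext s; exact hu x s
    have hut : ut u x t
        = a * t ^ (a - 1) * φ ω + b * (t ^ a * t⁻¹) * ω * deriv φ ω := by
      rw [ut, hxs, h5.deriv, hBsub, hω]; ring
    have hu2 : (u x t) ^ n * ux u x t = t ^ (a - 1) * (φ ω ^ n * deriv φ ω) := by
      rw [hu x t, ← hω, ux, hDx t]
      simp only [← hω]
      rw [mul_pow]
      linear_combination (φ ω ^ n * deriv φ ω) * hA2
    have hu3 : ε * t ^ ρ * uxxx u x t
        = t ^ (a - 1) * (ε * deriv (deriv (deriv φ)) ω) := by
      rw [uxxx]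
      have : iteratedDeriv 3 (fun y => u y t) = deriv (deriv (deriv (fun y => u y t))) := by
        simp [iteratedDeriv_succ, iteratedDeriv_zero]
      rw [this, hDxxx t]
      simp only [← hω]
      linear_combination (ε * deriv (deriv (deriv φ)) ω) * hA3
    rw [hut, hu2, hu3]
    have hode' := hode ω
    linear_combination t ^ (a - 1) * hode' + (b * ω * deriv φ ω) * hA1
      + (ω * deriv φ ω * t ^ (a - 1)) * hb
  · intro t ht
    rw [hu 0 t, zero_mul, hic]; ring
  · intro t ht
    rw [ux, hDx t]
    simp [hic']
  · intro t ht
    rw [uxx]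
    have : iteratedDeriv 2 (fun y => u y t) = deriv (deriv (fun y => u y t)) := by
      simp [iteratedDeriv_succ, iteratedDeriv_zero]
    rw [this, hDxx t]
    simp [hic'']
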